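/- A codeword x of a linear code C ≤ F_q^n is minimal if and only if its Hamming support σ(x) is a cocircuit of the matroid associated to C. -/

import Mathlib

open Matrix

private lemma dot_span_mem_iff {F : Type*} [Field F] {k : ℕ} (s : Set (Fin k → F))
    (v : Fin k → F) :
    v ∈ Submodule.span F s ↔
      ∀ y : Fin k → F, (∀ u ∈ s, y ⬝ᵥ u = 0) → y ⬝ᵥ v = 0 := by
  classical
  constructor
  · intro hv y hy
    induction hv using Submodule.span_induction with
    | mem u hu => exact hy u hu
    | zero => simp
    | add u w _ _ h1 h2 => simp [dotProduct_add, h1, h2]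
    | smul a u _ h => simp [dotProduct_smul, h]
  · intro h
    by_contra hv
    set U := Submodule.span F s with hUdef
    have hq : (Submodule.Quotient.mk v : (Fin k → F) ⧸ U) ≠ 0 := by
      simpa [Submodule.Quotient.mk_eq_zero] using hv
    have hex : ¬ ∀ φ : Module.Dual F ((Fin k → F) ⧸ U),
        φ (Submodule.Quotient.mk v) = 0 := by
      rw [Module.forall_dual_apply_eq_zero_iff]; exact hq
    push_neg at hex
    obtain ⟨φ, hφ⟩ := hex
    set ψ : (Fin k → F) →ₗ[F] F := φ.comp U.mkQ with hψdef
    set y : Fin k → F := fun i => ψ fun j => if i = j then 1 else 0 with hydef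
    have hψ : ∀ u : Fin k → F, ψ u = y ⬝ᵥ u := by
      intro u
      rw [LinearMap.pi_apply_eq_sum_univ ψ u]
      simp [dotProduct, hydef, mul_comm]
    have h0 : ∀ u ∈ s, y ⬝ᵥ u = 0 := by
      intro u hu
      rw [← hψ]
      have hm : U.mkQ u = 0 := (Submodule.Quotient.mk_eq_zero U).mpr
        (Submodule.subset_span hu)
      simp [hψdef, LinearMap.comp_apply, hm]
    have hzero := h y h0
    rw [← hψ] at hzero
    exact hφ (by simpa [hψdef, Submodule.mkQ_apply] using hzero)

private lemma key_rank_iff {F : Type*} [Field F] {n k : ℕ} (C : Submodule F (Fin n → F))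
    (G : Matrix (Fin k) (Fin n) F) (hG : Submodule.span F (Set.range G) = C)
    (A : Finset (Fin n)) :
    Module.finrank F (Submodule.span F
        ((fun j : Fin n => fun i : Fin k => G i j) '' ((Aᶜ : Finset (Fin n)) : Set (Fin n))))
      = Module.finrank F (Submodule.span F
        ((fun j : Fin n => fun i : Fin k => G i j) ''
          ((Finset.univ : Finset (Fin n)) : Set (Fin n))))
    ↔ ∀ w ∈ C, (∀ i, w i ≠ 0 → i ∈ A) → w = 0 := by
  classical
  set col : Fin n → (Fin k → F) := fun j i => G i j with hcol
  set U := Submodule.span F (col '' ((Aᶜ : Finset (Fin n)) : Set (Fin n))) with hU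
  set V := Submodule.span F (col '' ((Finset.univ : Finset (Fin n)) : Set (Fin n))) with hV
  have hUV : U ≤ V := Submodule.span_mono (Set.image_mono (by simp))
  have hvm : ∀ (y : Fin k → F) (j : Fin n), (G.vecMulLinear y) j = y ⬝ᵥ col j := by
    intro y j
    simp [Matrix.vecMulLinear_apply, Matrix.vecMul, hcol]
  have hmemC : ∀ w, w ∈ C ↔ ∃ y : Fin k → F, ∀ j, w j = y ⬝ᵥ col j := by
    intro w
    rw [← hG, show Set.range G = Set.range G.row from rfl, ← range_vecMulLinear]
    constructor
    · rintro ⟨y, rfl⟩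
      exact ⟨y, fun j => (hvm y j).symm⟩
    · rintro ⟨y, hy⟩
      exact ⟨y, by funext j; rw [hvm y j, ← hy j]⟩
  constructor
  · intro hrank w hw hsupp
    have hUVeq : U = V := Submodule.eq_of_le_of_finrank_le hUV (le_of_eq hrank.symm)
    obtain ⟨y, hy⟩ := (hmemC w).mp hw
    have h0 : ∀ u ∈ col '' ((Aᶜ : Finset (Fin n)) : Set (Fin n)), y ⬝ᵥ u = 0 := by
      rintro u ⟨j, hj, rfl⟩
      have hjA : j ∉ A := by simpa using hj
      have hwj : w j = 0 := by
        by_contra hwj; exact hjA (hsupp j hwj)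
      rw [← hy j, hwj]
    funext j
    have hcolj : col j ∈ U := by
      rw [hUVeq]
      exact Submodule.subset_span ⟨j, by simp, rfl⟩
    have hz := (dot_span_mem_iff _ _).mp hcolj y h0
    show w j = 0
    rw [hy j, hz]
  · intro hzero
    refine le_antisymm (Submodule.finrank_mono hUV) ?_
    have hall : ∀ j, col j ∈ U := by
      intro j
      rw [hU, dot_span_mem_iff]
      intro y hy
      set w : Fin n → F := fun j' => y ⬝ᵥ col j' with hw
      have hwC : w ∈ C := (hmemC w).mpr ⟨y, fun _ => rfl⟩
      have hwsupp : ∀ i, w i ≠ 0 → i ∈ A := by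
        intro i hi
        by_contra hiA
        exact hi (hy (col i) ⟨i, by simpa using hiA, rfl⟩)
      have h0 := hzero w hwC hwsupp
      have := congrFun h0 j
      simpa [hw] using this
    exact Submodule.finrank_mono (Submodule.span_le.mpr
      (by rintro u ⟨j, _, rfl⟩; exact hall j))

theorem minimal_codeword_iff_support_cocircuit {F : Type*} [Field F] [DecidableEq F]
    {n k : ℕ} (C : Submodule F (Fin n → F)) (G : Matrix (Fin k) (Fin n) F)
    (hG : Submodule.span F (Set.range G) = C)
    (r : Finset (Fin n) → ℕ)
    (hr : ∀ A : Finset (Fin n),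
      r A = Module.finrank F (Submodule.span F
        ((fun j : Fin n => fun i : Fin k => G i j) '' (A : Set (Fin n)))))
    (x : Fin n → F) (hx : x ∈ C) (hx0 : x ≠ 0) :
    (∀ w ∈ C, (∀ i, w i ≠ 0 → x i ≠ 0) → ∃ c : F, w = c • x)
    ↔ ((Finset.univ.filter fun i => x i ≠ 0).card
          + r (Finset.univ.filter fun i => x i ≠ 0)ᶜ - r Finset.univ
        < (Finset.univ.filter fun i => x i ≠ 0).card ∧
      ∀ Y ⊂ (Finset.univ.filter fun i => x i ≠ 0),
        Y.card + r Yᶜ - r Finset.univ = Y.card) := by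
  classical
  set S : Finset (Fin n) := Finset.univ.filter (fun i => x i ≠ 0) with hS
  have hmemS : ∀ i, i ∈ S ↔ x i ≠ 0 := by intro i; simp [hS]
  have hmono : ∀ B : Finset (Fin n), r B ≤ r Finset.univ := by
    intro B
    rw [hr B, hr Finset.univ]
    exact Submodule.finrank_mono (Submodule.span_mono (Set.image_mono (by simp)))
  have hkey : ∀ A : Finset (Fin n), (r Aᶜ = r Finset.univ ↔
      ∀ w ∈ C, (∀ i, w i ≠ 0 → i ∈ A) → w = 0) := by
    intro A
    rw [hr, hr]
    exact key_rank_iff C G hG A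
  have hScard : 1 ≤ S.card := by
    obtain ⟨i, hi⟩ := Function.ne_iff.mp hx0
    exact Finset.card_pos.mpr ⟨i, (hmemS i).mpr hi⟩
  constructor
  · intro hmin
    have h1 : r Sᶜ ≠ r Finset.univ := by
      intro h
      exact hx0 ((hkey S).mp h x hx (fun i hi => (hmemS i).mpr hi))
    have h1' : r Sᶜ < r Finset.univ := lt_of_le_of_ne (hmono _) h1
    refine ⟨by omega, ?_⟩
    intro Y hY
    have hYsub := hY.subset
    have heq : r Yᶜ = r Finset.univ := by
      rw [hkey Y]
      intro w hw hsupp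
      obtain ⟨c, rfl⟩ := hmin w hw (fun i hi => (hmemS i).mp (hYsub (hsupp i hi)))
      obtain ⟨i0, hi0S, hi0Y⟩ := Finset.exists_of_ssubset hY
      by_cases hc : c = 0
      · simp [hc]
      · exfalso
        have hne : (c • x) i0 ≠ 0 := by
          have hxi := (hmemS i0).mp hi0S
          simp [Pi.smul_apply, smul_eq_mul, hc, hxi]
        exact hi0Y (hsupp i0 hne)
    have := hmono Yᶜ
    omega
  · rintro ⟨h1, h2⟩ w hw hsupp
    obtain ⟨i0, hi0⟩ := Function.ne_iff.mp hx0
    have hi0S : i0 ∈ S := (hmemS i0).mpr hi0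
    set c : F := w i0 * (x i0)⁻¹ with hc
    refine ⟨c, ?_⟩
    set Y : Finset (Fin n) := S.erase i0 with hYdef
    have hYS : Y ⊂ S := Finset.erase_ssubset hi0S
    have hYeq : r Yᶜ = r Finset.univ := by
      by_cases hYe : Y = ∅
      · rw [hYe, Finset.compl_empty]
      · have hcard : 1 ≤ Y.card :=
          Finset.card_pos.mpr (Finset.nonempty_of_ne_empty hYe)
        have h2Y := h2 Y hYS
        have := hmono Yᶜ
        omega
    have hv : w - c • x = 0 := by
      refine (hkey Y).mp hYeq (w - c • x)
        (Submodule.sub_mem C hw (Submodule.smul_mem C c hx)) ?_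
      intro i hi
      by_cases hix : x i = 0
      · exfalso
        have hwi : w i = 0 := by
          by_contra hwi; exact (hsupp i hwi) hix
        exact hi (by simp [Pi.sub_apply, hwi, hix])
      · have hiS : i ∈ S := (hmemS i).mpr hix
        rcases eq_or_ne i i0 with rfl | hne
        · exfalso
          apply hi
          simp [Pi.sub_apply, hc, smul_eq_mul, mul_assoc, inv_mul_cancel₀ hi0]
        · exact Finset.mem_erase.mpr ⟨hne, hiS⟩
    exact (sub_eq_zero.mp hv)
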